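/- Let M be a d-dimensional subspace of ℝ^{m×n} and let X* ∈ M have rank r. Assume there exists a (d−1)-dimensional subspace M̃ ⊆ M with M = span{X*} ⊕ M̃ such that for every X̃ ∈ M̃ the column spaces of X* and X̃ intersect trivially and the column spaces of X*ᵀ and X̃ᵀ intersect trivially. Let P ∈ ℝ^{m×m} and Q ∈ ℝ^{n×n} be the orthogonal projections onto the orthogonal complements of the column space of X* and of the column space of X*ᵀ, respectively. Then every X ∈ M satisfying P X Q = 0 is a scalar multiple of X*; that is, T_{X*}R_r ∩ M = span{X*}. -/

import Mathlib

open Matrix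

/-- Sufficient condition for the nontangential intersection condition: if
`M = span{X*} ⊕ M̃` with `dim M̃ = d − 1` and every `X̃ ∈ M̃` has column space and row
space intersecting those of `X*` trivially, then every `X ∈ M` with `P X Q = 0`
(`P`, `Q` the orthogonal projections onto the orthogonal complements of the column
spaces of `X*` and `X*ᵀ`) is a scalar multiple of `X*`. -/
theorem nontangential_of_trivial_intersections {m n d : ℕ}
    (M : Submodule ℝ (Matrix (Fin m) (Fin n) ℝ))
    (hM : Module.finrank ℝ M = d)
    (Xs : Matrix (Fin m) (Fin n) ℝ) (hXsM : Xs ∈ M)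
    (r : ℕ) (hr : Xs.rank = r)
    (Mt : Submodule ℝ (Matrix (Fin m) (Fin n) ℝ))
    (hMt : Module.finrank ℝ Mt = d - 1)
    (hsup : Submodule.span ℝ {Xs} ⊔ Mt = M)
    (hdisj : Disjoint (Submodule.span ℝ ({Xs} : Set (Matrix (Fin m) (Fin n) ℝ))) Mt)
    (hcol : ∀ Xt ∈ Mt,
      LinearMap.range Xs.mulVecLin ⊓ LinearMap.range Xt.mulVecLin = ⊥)
    (hrow : ∀ Xt ∈ Mt,
      LinearMap.range Xsᵀ.mulVecLin ⊓ LinearMap.range Xtᵀ.mulVecLin = ⊥)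
    (P : Matrix (Fin m) (Fin m) ℝ) (Q : Matrix (Fin n) (Fin n) ℝ)
    (hPsymm : Pᵀ = P) (hPidem : P * P = P)
    (hPker : ∀ v : Fin m → ℝ, P.mulVec v = 0 ↔ v ∈ LinearMap.range Xs.mulVecLin)
    (hQsymm : Qᵀ = Q) (hQidem : Q * Q = Q)
    (hQker : ∀ v : Fin n → ℝ, Q.mulVec v = 0 ↔ v ∈ LinearMap.range Xsᵀ.mulVecLin) :
    ∀ X ∈ M, P * X * Q = 0 → ∃ c : ℝ, X = c • Xs := by
  intro X hX hPXQ
  -- decompose X = c • Xs + t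
  have hX' : X ∈ Submodule.span ℝ {Xs} ⊔ Mt := by rw [hsup]; exact hX
  rcases Submodule.mem_sup.mp hX' with ⟨a, ha, t, ht, rfl⟩
  rcases Submodule.mem_span_singleton.mp ha with ⟨c, rfl⟩
  -- P * Xs = 0
  have hPXs : P * Xs = 0 := by
    ext i j
    have : P.mulVec (Xs.mulVec (Pi.single j 1)) = 0 :=
      (hPker _).mpr ⟨Pi.single j 1, rfl⟩
    have h2 := congrFun this i
    simp only [Matrix.mulVec_mulVec] at h2
    simpa [Matrix.mulVec_single] using h2
  -- Xs * Q = 0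
  have hXsQ : Xs * Q = 0 := by
    have hQXsT : Q * Xsᵀ = 0 := by
      ext i j
      have : Q.mulVec (Xsᵀ.mulVec (Pi.single j 1)) = 0 :=
        (hQker _).mpr ⟨Pi.single j 1, rfl⟩
      have h2 := congrFun this i
      simp only [Matrix.mulVec_mulVec] at h2
      simpa [Matrix.mulVec_single] using h2
    have := congrArg Matrix.transpose hQXsT
    simpa [Matrix.transpose_mul, hQsymm] using this
  -- hence P * t * Q = 0
  have hPtQ : P * t * Q = 0 := by
    have : P * (c • Xs + t) * Q = P * t * Q := by
      simp [Matrix.mul_add, Matrix.add_mul, Matrix.mul_smul, Matrix.smul_mul, hPXs]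
    rw [← this, hPXQ]
  -- t * Q = 0
  have htQ : t * Q = 0 := by
    ext i j
    have hv : (P * t * Q).mulVec (Pi.single j 1) = 0 := by rw [hPtQ]; exact Matrix.zero_mulVec _
    have hv' : P.mulVec (t.mulVec (Q.mulVec (Pi.single j 1))) = 0 := by
      rw [Matrix.mulVec_mulVec, Matrix.mulVec_mulVec]; exact hv
    have hmem : t.mulVec (Q.mulVec (Pi.single j 1)) ∈
        LinearMap.range Xs.mulVecLin ⊓ LinearMap.range t.mulVecLin :=
      ⟨(hPker _).mp hv', ⟨Q.mulVec (Pi.single j 1), rfl⟩⟩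
    rw [hcol t ht] at hmem
    have hz : t.mulVec (Q.mulVec (Pi.single j 1)) = 0 := Submodule.mem_bot ℝ |>.mp hmem
    have h2 := congrFun hz i
    simp only [Matrix.mulVec_mulVec] at h2
    simpa [Matrix.mulVec_single] using h2
  -- t = 0
  have htz : t = 0 := by
    have hQtT : Q * tᵀ = 0 := by
      have := congrArg Matrix.transpose htQ
      simpa [Matrix.transpose_mul, hQsymm] using this
    have htT : tᵀ = 0 := by
      ext i j
      have hv : (Q * tᵀ).mulVec (Pi.single j 1) = 0 := by rw [hQtT]; exact Matrix.zero_mulVec _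
      have hv' : Q.mulVec (tᵀ.mulVec (Pi.single j 1)) = 0 := by
        rw [Matrix.mulVec_mulVec]; exact hv
      have hmem : tᵀ.mulVec (Pi.single j 1) ∈
          LinearMap.range Xsᵀ.mulVecLin ⊓ LinearMap.range tᵀ.mulVecLin :=
        ⟨(hQker _).mp hv', ⟨Pi.single j 1, rfl⟩⟩
      rw [hrow t ht] at hmem
      have hz := Submodule.mem_bot ℝ |>.mp hmem
      have h2 := congrFun hz i
      simpa [Matrix.mulVec_single] using h2
    have := congrArg Matrix.transpose htT
    simpa using this
  exact ⟨c, by rw [htz, add_zero]⟩
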